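/- Let b, n be integers with n ≥ 1 and let k ≥ 1. The number of k-tuples (x_1,...,x_k) ∈ (Z/nZ)^k with x_1 + ... + x_k ≡ b (mod n) and gcd(x_i, n) = 1 for all i equals (φ(n)^k / n) · Π_{p | n, p | b} (1 - (-1)^{k-1}/(p-1)^{k-1}) · Π_{p | n, p ∤ b} (1 - (-1)^k/(p-1)^k). -/

import Mathlib

open Finset

-- number of k-tuples of units with given sum
noncomputable def RBcount (n k : ℕ) (b : ZMod n) : ℕ :=
  Nat.card {x : Fin k → (ZMod n)ˣ // ∑ i, ((x i : ZMod n)) = b}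

-- coset count lemma
theorem card_sum_eq {M : Type*} [AddCommGroup M] [Finite M] (m : ℕ) (c : M) :
    Nat.card {z : Fin (m+1) → M // ∑ i, z i = c} = (Nat.card M) ^ m := by
  have e : {z : Fin (m+1) → M // ∑ i, z i = c} ≃ (Fin m → M) :=
    { toFun := fun z i => z.1 i.castSucc
      invFun := fun f => ⟨Fin.snoc f (c - ∑ i, f i), by
        rw [Fin.sum_univ_castSucc]
        simp⟩
      left_inv := by
        rintro ⟨z, hz⟩
        ext i
        simp only
        refine Fin.lastCases ?_ (fun j => ?_) i
        · rw [Fin.snoc_last]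
          rw [Fin.sum_univ_castSucc] at hz
          simp only [← hz]
          abel
        · rw [Fin.snoc_castSucc]
      right_inv := by
        intro f; ext i; simp [Fin.snoc_castSucc] }
  rw [Nat.card_congr e, Nat.card_fun]
  simp

theorem nat_card_sigma {ι : Type*} [Fintype ι] (f : ι → Type*) [∀ i, Finite (f i)] :
    Nat.card (Σ i, f i) = ∑ i, Nat.card (f i) := by
  classical
  letI : ∀ i, Fintype (f i) := fun i => Fintype.ofFinite _
  simp [Nat.card_eq_fintype_card, Fintype.card_sigma]

theorem RBcount_succ (n k : ℕ) [NeZero n] (b : ZMod n) :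
    RBcount n (k+1) b = ∑ u : (ZMod n)ˣ, RBcount n k (b - u) := by
  have e : {x : Fin (k+1) → (ZMod n)ˣ // ∑ i, ((x i : ZMod n)) = b} ≃
      Σ u : (ZMod n)ˣ, {x : Fin k → (ZMod n)ˣ // ∑ i, ((x i : ZMod n)) = b - u} :=
    { toFun := fun z => ⟨z.1 (Fin.last k), ⟨Fin.init z.1, by
        have hz := z.2
        rw [Fin.sum_univ_castSucc] at hz
        simp only [Fin.init]
        exact eq_sub_of_add_eq hz⟩⟩
      invFun := fun w => ⟨Fin.snoc w.2.1 w.1, by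
        rw [Fin.sum_univ_castSucc]
        simp [w.2.2]⟩
      left_inv := by
        rintro ⟨z, hz⟩
        simp only
        congr 1
        exact Fin.snoc_init_self z
      right_inv := by
        rintro ⟨u, ⟨x, hx⟩⟩
        refine Sigma.ext (by simp) ?_
        rw [Subtype.heq_iff_coe_eq (fun y => by simp)]
        simp only []
        exact Fin.init_snoc _ _ }
  rw [RBcount, Nat.card_congr e, nat_card_sigma]
  rfl

theorem card_units_p (p : ℕ) [NeZero p] (hp : p.Prime) :
    (Finset.univ : Finset (ZMod p)ˣ).card = p - 1 := by
  rw [Finset.card_univ, ZMod.card_units_eq_totient, Nat.totient_prime hp]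

theorem RBcount_prime (p : ℕ) (hp : p.Prime) (k : ℕ) (hk : 0 < k) (b : ZMod p) :
    (p : ℚ) * RBcount p k b =
      if b = 0 then ((p:ℚ)-1)^k + (-1:ℚ)^k * ((p:ℚ)-1) else ((p:ℚ)-1)^k - (-1:ℚ)^k := by
  haveI : Fact p.Prime := ⟨hp⟩
  haveI : NeZero p := ⟨hp.ne_zero⟩
  have hp2 : 2 ≤ p := hp.two_le
  have hq2 : (2:ℚ) ≤ (p:ℚ) := by exact_mod_cast hp2
  induction k, hk using Nat.le_induction generalizing b with
  | base =>
    have e1 : {x : Fin 1 → (ZMod p)ˣ // ∑ i, ((x i : ZMod p)) = b} ≃ {u : (ZMod p)ˣ // (u : ZMod p) = b} :=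
      { toFun := fun z => ⟨z.1 0, by have := z.2; rwa [Fin.sum_univ_one] at this⟩
        invFun := fun u => ⟨fun _ => u.1, by rw [Fin.sum_univ_one]; exact u.2⟩
        left_inv := by
          rintro ⟨z, hz⟩
          refine Subtype.ext (funext fun i => ?_)
          exact congrArg z (Fin.fin_one_eq_zero i).symm
        right_inv := by rintro ⟨u, hu⟩; rfl }
    rw [RBcount, Nat.card_congr e1]
    by_cases hb : b = 0
    · haveI : IsEmpty {u : (ZMod p)ˣ // (u : ZMod p) = b} :=
        ⟨by rintro ⟨u, hu⟩; exact u.ne_zero (hu.trans hb)⟩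
      simp [hb, Nat.card_of_isEmpty]
    · haveI : Unique {u : (ZMod p)ˣ // (u : ZMod p) = b} :=
      { default := ⟨(isUnit_iff_ne_zero.mpr hb).unit, (isUnit_iff_ne_zero.mpr hb).unit_spec⟩
        uniq := by rintro ⟨u, hu⟩; exact Subtype.ext (Units.ext (by
          rw [hu]; exact ((isUnit_iff_ne_zero.mpr hb).unit_spec).symm)) }
      simp [hb, Nat.card_unique]
  | succ k hk ih =>
    rw [RBcount_succ, Nat.cast_sum, Finset.mul_sum]
    have hterm : ∀ u : (ZMod p)ˣ, (p:ℚ) * RBcount p k (b - u) =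
        if b - (u:ZMod p) = 0 then ((p:ℚ)-1)^k + (-1:ℚ)^k * ((p:ℚ)-1) else ((p:ℚ)-1)^k - (-1:ℚ)^k :=
      fun u => ih (b - u)
    by_cases hb : b = 0
    · have : ∀ u : (ZMod p)ˣ, (p:ℚ) * RBcount p k (b - u) = ((p:ℚ)-1)^k - (-1:ℚ)^k := by
        intro u
        rw [hterm u, if_neg]
        intro h
        exact u.ne_zero (by rw [hb] at h; linear_combination -h)
      rw [Finset.sum_congr rfl (fun u _ => this u), Finset.sum_const, card_units_p p hp,
        nsmul_eq_mul, if_pos hb]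
      have : ((p - 1 : ℕ) : ℚ) = (p:ℚ) - 1 := by
        rw [Nat.cast_sub hp.one_le]; norm_num
      rw [this, pow_succ, pow_succ]
      ring
    · set u0 : (ZMod p)ˣ := (isUnit_iff_ne_zero.mpr hb).unit with hu0
      have hu0c : (u0 : ZMod p) = b := (isUnit_iff_ne_zero.mpr hb).unit_spec
      rw [← Finset.add_sum_erase _ _ (Finset.mem_univ u0)]
      have h1 : (p:ℚ) * RBcount p k (b - u0) = ((p:ℚ)-1)^k + (-1:ℚ)^k * ((p:ℚ)-1) := by
        rw [hterm u0, if_pos (by rw [hu0c]; ring)]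
      have h2 : ∀ u ∈ Finset.univ.erase u0, (p:ℚ) * RBcount p k (b - u) = ((p:ℚ)-1)^k - (-1:ℚ)^k := by
        intro u hu
        rw [hterm u, if_neg]
        intro h
        exact (Finset.ne_of_mem_erase hu) (Units.ext (by rw [← hu0c] at h; linear_combination -h))
      rw [h1, Finset.sum_congr rfl h2, Finset.sum_const, nsmul_eq_mul,
        Finset.card_erase_of_mem (Finset.mem_univ u0), card_units_p p hp, if_neg hb]
      have : ((p - 1 - 1 : ℕ) : ℚ) = (p:ℚ) - 2 := by
        have : p - 1 - 1 = p - 2 := by omega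
        rw [this, Nat.cast_sub hp2]; norm_num
      rw [this, pow_succ, pow_succ]
      ring

theorem RBcount_eq_orig (n k : ℕ) [NeZero n] (b : ℤ) :
    Nat.card {x : Fin k → ZMod n //
        (∑ i, x i) = (b : ZMod n) ∧ ∀ i, Nat.gcd (x i).val n = 1}
      = RBcount n k (b : ZMod n) := by
  refine Nat.card_congr ?_
  have key : ∀ x : ZMod n, Nat.gcd x.val n = 1 ↔ IsUnit x := by
    intro x
    constructor
    · intro h
      have : IsUnit ((x.val : ZMod n)) := (ZMod.isUnit_iff_coprime x.val n).mpr h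
      rwa [ZMod.natCast_zmod_val] at this
    · intro h
      have := (ZMod.isUnit_iff_coprime x.val n).mp (by rwa [ZMod.natCast_zmod_val])
      exact this
  exact
    { toFun := fun z => ⟨fun i => ((key _).mp (z.2.2 i)).unit, by
        have := z.2.1
        simpa only [IsUnit.unit_spec] using this⟩
      invFun := fun w => ⟨fun i => (w.1 i : ZMod n), w.2, fun i => (key _).mpr (w.1 i).isUnit⟩
      left_inv := by
        rintro ⟨z, hz⟩
        refine Subtype.ext (funext fun i => ?_)
        exact ((key _).mp (hz.2 i)).unit_spec
      right_inv := by
        rintro ⟨w, hw⟩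
        refine Subtype.ext (funext fun i => ?_)
        exact Units.ext (((key _).mp ((key _).mpr (w i).isUnit)).unit_spec) }

theorem RBcount_mul (m n k : ℕ) [NeZero m] [NeZero n] (h : Nat.Coprime m n) (b : ℤ) :
    RBcount (m*n) k ((b : ℤ) : ZMod (m*n)) = RBcount m k (b : ZMod m) * RBcount n k (b : ZMod n) := by
  haveI : NeZero (m*n) := ⟨mul_ne_zero (NeZero.ne m) (NeZero.ne n)⟩
  set e := ZMod.chineseRemainder h with he
  set eu : (ZMod (m*n))ˣ ≃ (ZMod m)ˣ × (ZMod n)ˣ :=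
    (Units.mapEquiv e.toMulEquiv).toEquiv.trans MulEquiv.prodUnits.toEquiv with heu
  have hcoe : ∀ u : (ZMod (m*n))ˣ,
      (((eu u).1 : ZMod m), ((eu u).2 : ZMod n)) = e (u : ZMod (m*n)) := by
    intro u
    simp [heu, MulEquiv.prodUnits, Units.coe_map]
  have hcond : ∀ x : Fin k → (ZMod (m*n))ˣ,
      (∑ i, ((x i : ZMod (m*n))) = ((b : ℤ) : ZMod (m*n))) ↔
        ((∑ i, (((eu (x i)).1 : ZMod m)) = (b : ZMod m)) ∧
         (∑ i, (((eu (x i)).2 : ZMod n)) = (b : ZMod n))) := by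
    intro x
    rw [← e.injective.eq_iff, map_sum, map_intCast]
    constructor
    · intro hsum
      constructor
      · have := congrArg Prod.fst hsum
        simpa [← hcoe, Prod.fst_sum] using this
      · have := congrArg Prod.snd hsum
        simpa [← hcoe, Prod.snd_sum] using this
    · rintro ⟨h1, h2⟩
      refine Prod.ext ?_ ?_
      · simpa [← hcoe, Prod.fst_sum] using h1
      · simpa [← hcoe, Prod.snd_sum] using h2
  have E : {x : Fin k → (ZMod (m*n))ˣ // ∑ i, ((x i : ZMod (m*n))) = ((b : ℤ) : ZMod (m*n))} ≃
      {y : Fin k → (ZMod m)ˣ // ∑ i, ((y i : ZMod m)) = (b : ZMod m)} ×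
      {z : Fin k → (ZMod n)ˣ // ∑ i, ((z i : ZMod n)) = (b : ZMod n)} :=
    { toFun := fun x => (⟨fun i => (eu (x.1 i)).1, ((hcond x.1).mp x.2).1⟩,
        ⟨fun i => (eu (x.1 i)).2, ((hcond x.1).mp x.2).2⟩)
      invFun := fun w => ⟨fun i => eu.symm (w.1.1 i, w.2.1 i), by
        refine (hcond _).mpr ⟨?_, ?_⟩
        · simpa only [Equiv.apply_symm_apply] using w.1.2
        · simpa only [Equiv.apply_symm_apply] using w.2.2⟩
      left_inv := by
        rintro ⟨x, hx⟩
        refine Subtype.ext (funext fun i => ?_)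
        simp
      right_inv := by
        rintro ⟨⟨y, hy⟩, ⟨z, hz⟩⟩
        refine Prod.ext (Subtype.ext (funext fun i => ?_)) (Subtype.ext (funext fun i => ?_)) <;>
          simp }
  rw [RBcount, Nat.card_congr E, Nat.card_prod]
  rfl

theorem isUnit_zmod_pow_iff (p c : ℕ) (hp : p.Prime) (hc : c ≠ 0) (x : ZMod (p^c)) :
    IsUnit x ↔ ¬ p ∣ x.val := by
  haveI : NeZero (p^c) := ⟨pow_ne_zero _ hp.ne_zero⟩
  rw [← ZMod.natCast_zmod_val x, ZMod.isUnit_iff_coprime, Nat.coprime_pow_right_iff (Nat.pos_of_ne_zero hc),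
    Nat.coprime_comm, Nat.Prime.coprime_iff_not_dvd hp, ZMod.natCast_zmod_val]

theorem RBcount_eq_isUnit (n k : ℕ) [NeZero n] (b : ZMod n) :
    RBcount n k b = Nat.card {x : Fin k → ZMod n // ∑ i, x i = b ∧ ∀ i, IsUnit (x i)} := by
  refine Nat.card_congr (Equiv.symm ?_)
  exact
    { toFun := fun z => ⟨fun i => (z.2.2 i).unit, by
        have := z.2.1
        simpa only [IsUnit.unit_spec] using this⟩
      invFun := fun w => ⟨fun i => (w.1 i : ZMod n), w.2, fun i => (w.1 i).isUnit⟩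
      left_inv := by
        rintro ⟨z, hz⟩
        exact Subtype.ext (funext fun i => (hz.2 i).unit_spec)
      right_inv := by
        rintro ⟨w, hw⟩
        exact Subtype.ext (funext fun i => Units.ext ((w i).isUnit.unit_spec)) }

theorem RBcount_pow_step (p a j : ℕ) (hp : p.Prime) (ha : a ≠ 0) (b : ℤ) :
    RBcount (p^(a+1)) (j+1) ((b : ℤ) : ZMod (p^(a+1))) =
      p^j * RBcount (p^a) (j+1) (b : ZMod (p^a)) := by
  haveI : NeZero (p^a) := ⟨pow_ne_zero _ hp.ne_zero⟩
  haveI : NeZero (p^(a+1)) := ⟨pow_ne_zero _ hp.ne_zero⟩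
  set k := j + 1 with hkdef
  have hdvd : p^a ∣ p^(a+1) := pow_dvd_pow p (Nat.le_succ a)
  set π : ZMod (p^(a+1)) →+* ZMod (p^a) := ZMod.castHom hdvd (ZMod (p^a)) with hπ
  -- unit correspondence
  have hval : ∀ x : ZMod (p^(a+1)), (π x).val = x.val % p^a := by
    intro x
    rw [← ZMod.natCast_zmod_val x, map_natCast, ZMod.val_natCast]
    simp
  have hunit : ∀ x : ZMod (p^(a+1)), IsUnit x ↔ IsUnit (π x) := by
    intro x
    rw [isUnit_zmod_pow_iff p _ hp (Nat.succ_ne_zero a), isUnit_zmod_pow_iff p _ hp ha, hval,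
      Nat.dvd_mod_iff (dvd_pow_self p ha)]
  -- surjectivity of π
  have hsurj : ∀ y : ZMod (p^a), π ((y.val : ℕ) : ZMod (p^(a+1))) = y := by
    intro y
    rw [map_natCast, ZMod.natCast_zmod_val]
  -- the kernel
  set K : AddSubgroup (ZMod (p^(a+1))) := π.toAddMonoidHom.ker with hK
  have hKmem : ∀ z : ZMod (p^(a+1)), z ∈ K ↔ π z = 0 := fun z => Iff.rfl
  have hcardK : Nat.card K = p := by
    have h1 : Nat.card (ZMod (p^(a+1))) = Nat.card (ZMod (p^(a+1)) ⧸ K) * Nat.card K :=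
      AddSubgroup.card_eq_card_quotient_mul_card_addSubgroup K
    have h2 : Nat.card (ZMod (p^(a+1)) ⧸ K) = Nat.card (ZMod (p^a)) :=
      Nat.card_congr (QuotientAddGroup.quotientKerEquivOfSurjective π.toAddMonoidHom
        (fun y => ⟨((y.val : ℕ) : ZMod (p^(a+1))), hsurj y⟩)).toEquiv
    rw [h2, Nat.card_zmod, Nat.card_zmod] at h1
    have h3 : p^a * p = p^a * Nat.card K := by rw [← pow_succ]; exact h1
    exact (Nat.eq_of_mul_eq_mul_left (pow_pos hp.pos a) h3).symm
  have coe_sum : ∀ (z : Fin k → K),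
      ((∑ i, z i : K) : ZMod (p^(a+1))) = ∑ i, (z i : ZMod (p^(a+1))) := by
    intro z
    exact map_sum K.subtype z Finset.univ
  rw [RBcount_eq_isUnit, RBcount_eq_isUnit]
  set S := {y : Fin k → ZMod (p^a) // ∑ i, y i = (b : ZMod (p^a)) ∧ ∀ i, IsUnit (y i)} with hS
  set T := {x : Fin k → ZMod (p^(a+1)) // ∑ i, x i = (b : ZMod (p^(a+1))) ∧ ∀ i, IsUnit (x i)}
    with hT
  set Φ : T → S := fun x => ⟨fun i => π (x.1 i), by
    constructor
    · rw [← map_sum, x.2.1, map_intCast]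
    · exact fun i => (hunit _).mp (x.2.2 i)⟩ with hΦ
  have fibcard : ∀ y : S, Nat.card {x : T // Φ x = y} = p ^ j := by
    intro y
    set t : Fin k → ZMod (p^(a+1)) := fun i => ((y.1 i).val : ZMod (p^(a+1))) with ht
    have hπt : ∀ i, π (t i) = y.1 i := fun i => hsurj _
    have hcmem : (b : ZMod (p^(a+1))) - ∑ i, t i ∈ K := by
      rw [hKmem, map_sub, map_intCast, map_sum]
      have : ∑ i, π (t i) = (b : ZMod (p^a)) := by
        rw [Finset.sum_congr rfl (fun i _ => hπt i)]
        exact y.2.1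
      rw [this, sub_self]
    set c : K := ⟨(b : ZMod (p^(a+1))) - ∑ i, t i, hcmem⟩ with hc
    have hΦeq : ∀ x : T, Φ x = y ↔ ∀ i, π (x.1 i) = y.1 i := by
      intro x
      rw [hΦ]
      constructor
      · intro h i
        exact congrFun (congrArg Subtype.val h) i
      · intro h
        exact Subtype.ext (funext h)
    have E : {x : T // Φ x = y} ≃ {z : Fin k → K // ∑ i, z i = c} :=
      { toFun := fun x => ⟨fun i => ⟨x.1.1 i - t i, by
          rw [hKmem, map_sub, hπt, (hΦeq x.1).mp x.2, sub_self]⟩, by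
          refine Subtype.ext ?_
          rw [coe_sum]
          simp only [hc]
          rw [Finset.sum_sub_distrib, x.1.2.1]⟩
        invFun := fun z => ⟨⟨fun i => t i + (z.1 i : ZMod (p^(a+1))), by
          constructor
          · rw [Finset.sum_add_distrib, ← coe_sum, z.2]
            simp [hc]
          · intro i
            rw [hunit, map_add, hπt]
            have : π ((z.1 i : ZMod (p^(a+1)))) = 0 := (hKmem _).mp (z.1 i).2
            rw [this, add_zero]
            exact y.2.2 i⟩, by
          refine (hΦeq _).mpr (fun i => ?_)
          simp only
          rw [map_add, hπt]
          have : π ((z.1 i : ZMod (p^(a+1)))) = 0 := (hKmem _).mp (z.1 i).2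
          rw [this, add_zero]⟩
        left_inv := by
          rintro ⟨⟨x, hx⟩, hfx⟩
          refine Subtype.ext (Subtype.ext (funext fun i => ?_))
          simp only
          ring
        right_inv := by
          rintro ⟨z, hz⟩
          refine Subtype.ext (funext fun i => Subtype.ext ?_)
          simp only
          ring }
    rw [Nat.card_congr E, hkdef]
    rw [card_sum_eq j c, hcardK]
  letI : Fintype S := Fintype.ofFinite S
  calc Nat.card T = Nat.card (Σ y : S, {x : T // Φ x = y}) :=
        Nat.card_congr (Equiv.sigmaFiberEquiv Φ).symm
    _ = ∑ y : S, Nat.card {x : T // Φ x = y} := nat_card_sigma _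
    _ = ∑ _y : S, p ^ j := Finset.sum_congr rfl (fun y _ => fibcard y)
    _ = Nat.card S * p ^ j := by
        rw [Finset.sum_const, Finset.card_univ, Nat.card_eq_fintype_card, smul_eq_mul]
    _ = p ^ j * Nat.card S := Nat.mul_comm _ _

noncomputable def RB (n k : ℕ) (b : ℤ) : ℕ := RBcount n k ((b : ℤ) : ZMod n)

theorem RB_prime_formula (p k : ℕ) (hp : p.Prime) (hk : 0 < k) (b : ℤ) :
    (RB p k b : ℚ) = ((p:ℚ)-1)^k / p *
      (if (p:ℤ) ∣ b then (1 - (-1:ℚ)^(k-1)/((p:ℚ)-1)^(k-1))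
        else (1 - (-1:ℚ)^k/((p:ℚ)-1)^k)) := by
  obtain ⟨j, rfl⟩ : ∃ j, k = j + 1 := ⟨k-1, by omega⟩
  have hq0 : (p:ℚ) ≠ 0 := Nat.cast_ne_zero.mpr hp.ne_zero
  have hq1 : (p:ℚ) - 1 ≠ 0 := by
    have : (2:ℚ) ≤ (p:ℚ) := by exact_mod_cast hp.two_le
    intro h; nlinarith
  have hkey := RBcount_prime p hp (j+1) (Nat.succ_pos j) ((b : ℤ) : ZMod p)
  have hzero : ((b : ℤ) : ZMod p) = 0 ↔ (p:ℤ) ∣ b := ZMod.intCast_zmod_eq_zero_iff_dvd b p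
  have hRB : (RB p (j+1) b : ℚ) =
      (if (p:ℤ) ∣ b then ((p:ℚ)-1)^(j+1) + (-1:ℚ)^(j+1) * ((p:ℚ)-1)
        else ((p:ℚ)-1)^(j+1) - (-1:ℚ)^(j+1)) / p := by
    rw [eq_div_iff hq0, mul_comm]
    rw [RB, hkey]
    by_cases hd : (p:ℤ) ∣ b
    · rw [if_pos (hzero.mpr hd), if_pos hd]
    · rw [if_neg (fun h => hd (hzero.mp h)), if_neg hd]
  rw [hRB]
  by_cases hd : (p:ℤ) ∣ b
  · rw [if_pos hd, if_pos hd]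
    have : j + 1 - 1 = j := rfl
    rw [this]
    field_simp
    ring
  · rw [if_neg hd, if_neg hd]
    field_simp

theorem RB_pow (p k : ℕ) (hp : p.Prime) (hk : 0 < k) (b : ℤ) : ∀ a : ℕ, a ≠ 0 →
    RB (p^a) k b = p^((a-1)*(k-1)) * RB p k b := by
  intro a
  induction a with
  | zero => intro h; exact absurd rfl h
  | succ a ih =>
    intro _
    by_cases ha : a = 0
    · subst ha
      have h1 : RB (p^1) k b = RB p k b := congrArg (fun n => RB n k b) (pow_one p)
      rw [h1]
      norm_num
    · obtain ⟨j, rfl⟩ : ∃ j, k = j + 1 := ⟨k-1, by omega⟩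
      have step : RB (p^(a+1)) (j+1) b = p^j * RB (p^a) (j+1) b :=
        RBcount_pow_step p a j hp ha b
      rw [step, ih ha, ← mul_assoc, ← pow_add]
      congr 2
      obtain ⟨a', rfl⟩ : ∃ a', a = a' + 1 := ⟨a-1, by omega⟩
      simp only [Nat.add_sub_cancel]
      ring

theorem RB_pow_formula (p a k : ℕ) (hp : p.Prime) (ha : a ≠ 0) (hk : 0 < k) (b : ℤ) :
    (RB (p^a) k b : ℚ) = (Nat.totient (p^a) : ℚ)^k / ((p:ℚ)^a) *
      (if (p:ℤ) ∣ b then (1 - (-1:ℚ)^(k-1)/((p:ℚ)-1)^(k-1))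
        else (1 - (-1:ℚ)^k/((p:ℚ)-1)^k)) := by
  have hq0 : (p:ℚ) ≠ 0 := Nat.cast_ne_zero.mpr hp.ne_zero
  have htot : (Nat.totient (p^a) : ℚ) = (p:ℚ)^(a-1) * ((p:ℚ)-1) := by
    rw [Nat.totient_prime_pow hp (Nat.pos_of_ne_zero ha)]
    push_cast [Nat.cast_sub hp.one_le]
    ring
  rw [RB_pow p k hp hk b a ha, Nat.cast_mul, RB_prime_formula p k hp hk b, htot]
  rw [mul_pow, ← pow_mul]
  have h1 : (p:ℚ)^((a-1)*k) = (p:ℚ)^((a-1)*(k-1)) * (p:ℚ)^(a-1) := by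
    rw [← pow_add]
    congr 1
    obtain ⟨a', rfl⟩ : ∃ a', a = a' + 1 := ⟨a-1, by omega⟩
    obtain ⟨j, rfl⟩ : ∃ j, k = j + 1 := ⟨k-1, by omega⟩
    simp only [Nat.add_sub_cancel]
    ring
  have h2 : (p:ℚ)^a = (p:ℚ)^(a-1) * p := by
    rw [← pow_succ]
    congr 1
    omega
  rw [h1, h2]
  have hpa : (p:ℚ)^(a-1) ≠ 0 := pow_ne_zero _ hq0
  field_simp
  push_cast
  ring

noncomputable def RHSQ (n k : ℕ) (b : ℤ) : ℚ :=
  (Nat.totient n : ℚ) ^ k / n *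
    (∏ p ∈ n.primeFactors.filter (fun p : ℕ => (p : ℤ) ∣ b),
      (1 - (-1 : ℚ) ^ (k - 1) / ((p : ℚ) - 1) ^ (k - 1))) *
    (∏ p ∈ n.primeFactors.filter (fun p : ℕ => ¬ (p : ℤ) ∣ b),
      (1 - (-1 : ℚ) ^ k / ((p : ℚ) - 1) ^ k))

theorem RB_one (k : ℕ) (b : ℤ) : RB 1 k b = 1 := by
  rw [RB, RBcount]
  haveI : Unique {x : Fin k → (ZMod 1)ˣ // ∑ i, ((x i : ZMod 1)) = ((b:ℤ) : ZMod 1)} :=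
    { default := ⟨fun _ => 1, Subsingleton.elim _ _⟩
      uniq := fun x => Subtype.ext (funext fun i => Units.ext (Subsingleton.elim _ _)) }
  exact Nat.card_unique

theorem main_formula (k : ℕ) (hk : 0 < k) (b : ℤ) : ∀ n : ℕ, 0 < n →
    (RB n k b : ℚ) = RHSQ n k b := by
  classical
  refine Nat.recOnPosPrimePosCoprime ?_ ?_ ?_ ?_
  · -- prime powers
    intro p a hp ha _
    have hp' : p.Prime := hp
    rw [RB_pow_formula p a k hp' ha.ne' hk b, RHSQ,
      Nat.primeFactors_prime_pow ha.ne' hp]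
    rw [Finset.filter_singleton, Finset.filter_singleton]
    push_cast
    by_cases hd : (p:ℤ) ∣ b
    · simp only [if_pos hd, if_neg (not_not_intro hd), Finset.prod_singleton, Finset.prod_empty]
      try ring
    · simp only [if_neg hd, if_pos hd, Finset.prod_singleton, Finset.prod_empty]
      try ring
  · intro h; exact absurd h (lt_irrefl 0)
  · -- n = 1
    intro _
    rw [RB_one, RHSQ]
    simp
  · -- coprime multiplication
    intro m n hm hn hco ihm ihn _
    haveI : NeZero m := ⟨by omega⟩
    haveI : NeZero n := ⟨by omega⟩
    have hmul : (RB (m*n) k b : ℚ) = (RB m k b : ℚ) * (RB n k b : ℚ) := by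
      rw [RB, RB, RB, RBcount_mul m n k hco b]
      push_cast
      ring
    rw [hmul, ihm (by omega), ihn (by omega), RHSQ, RHSQ, RHSQ]
    have hpf : (m*n).primeFactors = m.primeFactors ∪ n.primeFactors :=
      Nat.primeFactors_mul (by omega) (by omega)
    have hdisj : Disjoint m.primeFactors n.primeFactors :=
      Nat.Coprime.disjoint_primeFactors hco
    have htot : (Nat.totient (m*n) : ℚ) = (Nat.totient m : ℚ) * (Nat.totient n : ℚ) := by
      rw [← Nat.cast_mul, Nat.totient_mul hco]
    rw [hpf, Finset.filter_union, Finset.filter_union,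
      Finset.prod_union (Finset.disjoint_filter_filter hdisj),
      Finset.prod_union (Finset.disjoint_filter_filter hdisj), htot]
    push_cast
    field_simp
    ring

theorem count_restricted_congruence_units (n : ℕ) (hn : 0 < n) (k : ℕ) (hk : 0 < k) (b : ℤ) :
    (Nat.card {x : Fin k → ZMod n //
        (∑ i, x i) = (b : ZMod n) ∧ ∀ i, Nat.gcd (x i).val n = 1} : ℚ) =
      (Nat.totient n : ℚ) ^ k / n *
        (∏ p ∈ n.primeFactors.filter (fun p : ℕ => (p : ℤ) ∣ b),
          (1 - (-1 : ℚ) ^ (k - 1) / ((p : ℚ) - 1) ^ (k - 1))) *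
        (∏ p ∈ n.primeFactors.filter (fun p : ℕ => ¬ (p : ℤ) ∣ b),
          (1 - (-1 : ℚ) ^ k / ((p : ℚ) - 1) ^ k)) := by
  haveI : NeZero n := ⟨hn.ne'⟩
  rw [RBcount_eq_orig n k b]
  have := main_formula k hk b n hn
  rw [RB] at this
  rw [this, RHSQ]
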